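/- Let B, B' be nonnegatively filtered algebras with gr B ≅ gr B' finitely generated commutative, and let K be a finitely generated (B,B')-bimodule whose characteristic variety (as a left B ⊗ B'^op-module) is contained in the diagonal Δ ⊂ Spec(gr B) × Spec(gr B'). Then K is finitely generated as a left B-module and as a right B'-module. -/

import Mathlib

open MulOpposite

/-- An ascending, exhaustive, multiplicative `ℤ`-filtration on a ring `A`. -/
structure RingFiltration (A : Type*) [Ring A] where
  F : ℤ → AddSubgroup A
  mono : Monotone F
  one_mem : (1 : A) ∈ F 0
  mul_mem : ∀ {i j : ℤ} {a b : A}, a ∈ F i → b ∈ F j → a * b ∈ F (i + j)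
  exhaustive : ∀ a : A, ∃ i, a ∈ F i

/-- The filtration is nonnegative: `FₙA = 0` for `n < 0`. -/
def RingFiltration.Nonneg {A : Type*} [Ring A] (FA : RingFiltration A) : Prop :=
  ∀ n : ℤ, n < 0 → FA.F n = ⊥

/-- The associated graded ring `gr A` is commutative. -/
def GrCommutative {A : Type*} [Ring A] (FA : RingFiltration A) : Prop :=
  ∀ {i j : ℤ} {a b : A}, a ∈ FA.F i → b ∈ FA.F j → a * b - b * a ∈ FA.F (i + j - 1)

/-- The associated graded ring `gr A` is a finitely generated algebra: there is a finite
set `s` of homogeneous elements (of recorded degrees) such that modulo lower filtration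
degree every element of `FₙA` is a sum of monomials in the elements of `s` of total
degree at most `n`. -/
def GrFG {A : Type*} [Ring A] (FA : RingFiltration A) : Prop :=
  ∃ s : Finset (ℤ × A), (∀ p ∈ s, p.2 ∈ FA.F p.1) ∧
    ∀ n : ℤ, ∀ x ∈ FA.F n, ∃ y ∈ FA.F (n - 1), x - y ∈ AddSubgroup.closure
      {z : A | ∃ l : List (ℤ × A), (∀ p ∈ l, p ∈ s) ∧
        (l.map Prod.fst).sum ≤ n ∧ z = (l.map Prod.snd).prod}

/-- A compatible ascending exhaustive filtration on a `(B, B')`-bimodule `K` (a left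
`B`-module and right `B'`-module with commuting actions). -/
structure BimodFiltration {B B' K : Type*} [Ring B] [Ring B'] [AddCommGroup K]
    [Module B K] [Module B'ᵐᵒᵖ K]
    (FB : RingFiltration B) (FB' : RingFiltration B') where
  F : ℤ → AddSubgroup K
  mono : Monotone F
  smul_mem : ∀ {i j : ℤ} {b : B} {x : K}, b ∈ FB.F i → x ∈ F j → b • x ∈ F (i + j)
  smul_mem' : ∀ {i j : ℤ} {b' : B'} {x : K}, b' ∈ FB'.F i → x ∈ F j →
      (op b') • x ∈ F (i + j)
  exhaustive : ∀ x : K, ∃ i, x ∈ F i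

/-- The bimodule filtration is good: finitely many homogeneous elements generate, i.e.
every `x ∈ FₙK` is a sum of elements `a • v • b'` with `a ∈ F_iB`, `b' ∈ F_jB'`,
`v` a generator of degree `d` and `i + j + d ≤ n`.  (This says the Rees module of `K`
over the Rees ring of `B ⊗ B'^op` is finitely generated, so in particular `K` is a
finitely generated bimodule.) -/
def BimodGood {B B' K : Type*} [Ring B] [Ring B'] [AddCommGroup K]
    [Module B K] [Module B'ᵐᵒᵖ K]
    (FB : RingFiltration B) (FB' : RingFiltration B')
    (FK : BimodFiltration (K := K) FB FB') : Prop :=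
  ∃ s : Finset (ℤ × K), (∀ p ∈ s, p.2 ∈ FK.F p.1) ∧
    ∀ n : ℤ, ∀ x ∈ FK.F n,
      x ∈ ⨆ p ∈ s, ⨆ (i : ℤ) (j : ℤ) (_ : i + j + p.1 ≤ n),
        AddSubgroup.closure
          {z : K | ∃ a ∈ FB.F i, ∃ b' ∈ FB'.F j, z = a • (op b') • p.2}

/-- The characteristic variety of `K` is contained in the diagonal
`Δ ⊆ Spec (gr B) × Spec (gr B')` (under an isomorphism `gr B ≅ gr B'`): for every
homogeneous symbol `b` of `gr B` there is a corresponding homogeneous symbol `b'` of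
`gr B'` of the same degree such that the symbol of `b ⊗ 1 − 1 ⊗ b'` is nilpotent on
`gr K`, and symmetrically. -/
def DiagonalSupport {B B' K : Type*} [Ring B] [Ring B'] [AddCommGroup K]
    [Module B K] [Module B'ᵐᵒᵖ K]
    (FB : RingFiltration B) (FB' : RingFiltration B')
    (FK : BimodFiltration (K := K) FB FB') : Prop :=
  (∀ (i : ℤ) (b : B), b ∈ FB.F i → ∃ b' ∈ FB'.F i, ∃ N : ℕ, 0 < N ∧
    ∀ (n : ℤ) (x : K), x ∈ FK.F n →
      (fun y : K => b • y - (op b') • y)^[N] x ∈ FK.F (n + N * i - 1)) ∧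
  (∀ (i : ℤ) (b' : B'), b' ∈ FB'.F i → ∃ b ∈ FB.F i, ∃ N : ℕ, 0 < N ∧
    ∀ (n : ℤ) (x : K), x ∈ FK.F n →
      (fun y : K => b • y - (op b') • y)^[N] x ∈ FK.F (n + N * i - 1))

/-- The opposite filtration on the opposite ring. -/
def RingFiltration.op {B' : Type*} [Ring B'] (FB' : RingFiltration B') :
    RingFiltration B'ᵐᵒᵖ where
  F i :=
    { carrier := {x | x.unop ∈ FB'.F i}
      add_mem' := fun hx hy => by
        simp only [Set.mem_setOf_eq, unop_add] at *
        exact add_mem hx hy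
      zero_mem' := (FB'.F i).zero_mem
      neg_mem' := fun hx => by
        simp only [Set.mem_setOf_eq, unop_neg] at *
        exact neg_mem hx }
  mono := fun i j hij x hx => FB'.mono hij hx
  one_mem := FB'.one_mem
  mul_mem := fun {i j a b} ha hb => by
    show (a * b).unop ∈ FB'.F (i + j)
    rw [unop_mul, add_comm]
    exact FB'.mul_mem hb ha
  exhaustive := fun a => FB'.exhaustive a.unop

theorem RingFiltration.mem_op {B' : Type*} [Ring B'] (FB' : RingFiltration B') {i : ℤ}
    {x : B'ᵐᵒᵖ} : x ∈ (FB'.op).F i ↔ x.unop ∈ FB'.F i := Iff.rfl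

theorem RingFiltration.op_nonneg {B' : Type*} [Ring B'] {FB' : RingFiltration B'}
    (h : FB'.Nonneg) : (FB'.op).Nonneg := by
  intro n hn
  ext x
  rw [RingFiltration.mem_op, h n hn]
  simp [unop_eq_zero_iff]

theorem grCommutative_op {B' : Type*} [Ring B'] {FB' : RingFiltration B'}
    (h : GrCommutative FB') : GrCommutative FB'.op := by
  intro i j a b ha hb
  show (a * b - b * a).unop ∈ FB'.F (i + j - 1)
  have : (a * b - b * a).unop = b.unop * a.unop - a.unop * b.unop := by
    simp [unop_sub, unop_mul]
  rw [this]
  exact (by rw [add_comm] : FB'.F (j + i - 1) = FB'.F (i + j - 1)) ▸ h hb ha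

theorem grFG_op {B' : Type*} [Ring B'] {FB' : RingFiltration B'}
    (h : GrFG FB') : GrFG FB'.op := by
  classical
  obtain ⟨s', hs'1, hs'2⟩ := h
  refine ⟨s'.image (fun p => (p.1, op p.2)), ?_, ?_⟩
  · rintro p hp
    simp only [Finset.mem_image] at hp
    obtain ⟨q, hq, rfl⟩ := hp
    exact hs'1 q hq
  · intro n x hx
    obtain ⟨y, hy, hcy⟩ := hs'2 n x.unop hx
    refine ⟨op y, hy, ?_⟩
    have hsub : x - op y = op (x.unop - y) := by simp
    rw [hsub]
    have hmap : op (x.unop - y) ∈ AddSubgroup.map (opAddEquiv : B' ≃+ B'ᵐᵒᵖ).toAddMonoidHom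
        (AddSubgroup.closure {z : B' | ∃ l : List (ℤ × B'), (∀ p ∈ l, p ∈ s') ∧
          (l.map Prod.fst).sum ≤ n ∧ z = (l.map Prod.snd).prod}) :=
      ⟨_, hcy, rfl⟩
    rw [AddMonoidHom.map_closure] at hmap
    refine AddSubgroup.closure_mono ?_ hmap
    rintro z ⟨w, ⟨l, hl, hsum, rfl⟩, rfl⟩
    refine ⟨(l.map (fun p => (p.1, op p.2))).reverse, ?_, ?_, ?_⟩
    · intro q hq
      rw [List.mem_reverse, List.mem_map] at hq
      obtain ⟨q', hq', rfl⟩ := hq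
      exact Finset.mem_image_of_mem _ (hl q' hq')
    · rw [List.map_reverse, List.sum_reverse, List.map_map]
      simpa [Function.comp_def] using hsum
    · show opAddEquiv.toAddMonoidHom (l.map Prod.snd).prod = _
      rw [List.map_reverse, List.map_map]
      simp only [AddEquiv.coe_toAddMonoidHom, opAddEquiv_apply]
      rw [op_list_prod]
      congr 1
      simp [List.map_map, Function.comp]

theorem hc_aux {A C K : Type*} [Ring A] [Ring C] [AddCommGroup K]
    [Module A K] [Module C K] [SMulCommClass A C K]
    (FA : RingFiltration A) (FC : RingFiltration C)
    (hAneg : FA.Nonneg) (hCneg : FC.Nonneg)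
    (hAcomm : GrCommutative FA) (hCcomm : GrCommutative FC)
    (hCfg : GrFG FC)
    (FK : ℤ → AddSubgroup K) (hmono : Monotone FK)
    (hFA : ∀ {i j : ℤ} {a : A} {x : K}, a ∈ FA.F i → x ∈ FK j → a • x ∈ FK (i + j))
    (hFC : ∀ {i j : ℤ} {c : C} {x : K}, c ∈ FC.F i → x ∈ FK j → c • x ∈ FK (i + j))
    (hexh : ∀ x : K, ∃ i, x ∈ FK i)
    (s : Finset (ℤ × K)) (hs1 : ∀ p ∈ s, p.2 ∈ FK p.1)
    (hs2 : ∀ n : ℤ, ∀ x ∈ FK n, x ∈ ⨆ p ∈ s, ⨆ (i : ℤ) (j : ℤ) (_ : i + j + p.1 ≤ n),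
        AddSubgroup.closure {z : K | ∃ a ∈ FA.F i, ∃ c ∈ FC.F j, z = a • c • p.2})
    (hdiag : ∀ (i : ℤ) (c : C), c ∈ FC.F i → ∃ a ∈ FA.F i, ∃ N : ℕ, 0 < N ∧
      ∀ (n : ℤ) (x : K), x ∈ FK n → (fun y : K => a • y - c • y)^[N] x ∈ FK (n + N * i - 1)) :
    Module.Finite A K := by
  classical
  haveI := SMulCommClass.symm A C K
  obtain ⟨s', hs'1, hs'2⟩ := hCfg
  -- the letters
  set L := {p : ℤ × C // p ∈ s'} with hL
  choose aF haF NF hNF hDF using fun g : L => hdiag g.1.1 g.1.2 (hs'1 g.1 g.2)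
  set D : L → K → K := fun g y => aF g • y - g.1.2 • y with hD
  set wt : List L → ℤ := fun u => (u.map fun g => g.1.1).sum with hwt
  set Dw : List L → K → K := fun u x => u.foldr D x with hDw
  have Dw_nil : ∀ x, Dw [] x = x := fun x => rfl
  have Dw_cons : ∀ g u x, Dw (g :: u) x = D g (Dw u x) := fun g u x => rfl
  have Dw_append : ∀ u t x, Dw (u ++ t) x = Dw u (Dw t x) := by
    intro u t x; simp [hDw, List.foldr_append]
  have wt_cons : ∀ g u, wt (g :: u) = g.1.1 + wt u := by intro g u; simp [hwt]
  have mem_of_eq : ∀ {m m' : ℤ} {x : K}, m = m' → x ∈ FK m → x ∈ FK m' := by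
    rintro m m' x rfl hx; exact hx
  have Dmem : ∀ (g : L) (m : ℤ) (x : K), x ∈ FK m → D g x ∈ FK (m + g.1.1) := by
    intro g m x hx
    exact sub_mem (mem_of_eq (by ring) (hFA (haF g) hx)) (mem_of_eq (by ring) (hFC (hs'1 g.1 g.2) hx))
  have Dwmem : ∀ (u : List L) (m : ℤ) (x : K), x ∈ FK m → Dw u x ∈ FK (m + wt u) := by
    intro u
    induction u with
    | nil => intro m x hx; simpa [hwt, Dw_nil] using hx
    | cons g t ih =>
      intro m x hx
      rw [Dw_cons, wt_cons]
      exact mem_of_eq (by ring) (Dmem g _ _ (ih m x hx))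
  have Dsub : ∀ (g : L) (x y : K), D g (x - y) = D g x - D g y := by
    intro g x y; simp [hD, smul_sub]; abel
  have Dswap : ∀ (g h : L) (m : ℤ) (x : K), x ∈ FK m →
      D g (D h x) - D h (D g x) ∈ FK (m + g.1.1 + h.1.1 - 1) := by
    intro g h m x hx
    have key : D g (D h x) - D h (D g x)
        = (aF g * aF h - aF h * aF g) • x + (g.1.2 * h.1.2 - h.1.2 * g.1.2) • x := by
      simp only [hD, smul_sub, sub_smul, mul_smul]
      rw [smul_comm (aF g) (h.1.2) x, smul_comm (aF h) (g.1.2) x]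
      abel
    rw [key]
    exact add_mem (mem_of_eq (by ring) (hFA (hAcomm (haF g) (haF h)) hx))
      (mem_of_eq (by ring) (hFC (hCcomm (hs'1 g.1 g.2) (hs'1 h.1 h.2)) hx))
  have wt_perm : ∀ {u u' : List L}, u.Perm u' → wt u = wt u' := by
    intro u u' hp; exact (hp.map fun g => g.1.1).sum_eq
  have Dperm : ∀ {u u' : List L}, u.Perm u' → ∀ (m : ℤ) (x : K), x ∈ FK m →
      Dw u x - Dw u' x ∈ FK (m + wt u - 1) := by
    intro u u' hp
    induction hp with
    | nil => intro m x hx; simpa using zero_mem _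
    | cons g p ih =>
      intro m x hx
      rename_i t t'
      have : Dw (g :: t) x - Dw (g :: t') x = D g (Dw t x - Dw t' x) := by
        rw [Dw_cons, Dw_cons, Dsub]
      rw [this]
      exact mem_of_eq (by rw [wt_cons]; ring) (Dmem g _ _ (ih m x hx))
    | swap g h t =>
      intro m x hx
      have hy : Dw t x ∈ FK (m + wt t) := Dwmem t m x hx
      have := Dswap g h (m + wt t) (Dw t x) hy
      have h2 : Dw (h :: g :: t) x - Dw (g :: h :: t) x
          = -(D g (D h (Dw t x)) - D h (D g (Dw t x))) := by
        rw [Dw_cons, Dw_cons, Dw_cons, Dw_cons]; abel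
      rw [h2]
      exact neg_mem (mem_of_eq (by rw [wt_cons, wt_cons]; ring) this)
    | trans p q ih1 ih2 =>
      intro m x hx
      rename_i t₁ t₂ t₃
      have : Dw t₁ x - Dw t₃ x = (Dw t₁ x - Dw t₂ x) + (Dw t₂ x - Dw t₃ x) := by abel
      rw [this]
      exact add_mem (ih1 m x hx) (mem_of_eq (by rw [wt_perm p]) (ih2 m x hx))
  have Dw_replicate : ∀ (k : ℕ) (g : L) (x : K), Dw (List.replicate k g) x = (D g)^[k] x := by
    intro k g
    induction k with
    | zero => intro x; rfl
    | succ k ih =>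
      intro x
      rw [List.replicate_succ, Dw_cons, ih, ← Function.iterate_succ_apply' (D g) k x]
  have wt_replicate : ∀ (k : ℕ) (g : L), wt (List.replicate k g) = (k : ℤ) * g.1.1 := by
    intro k g; simp [hwt, List.map_replicate, List.sum_replicate, nsmul_eq_mul]
  have extract : ∀ (N : ℕ) (g : L) (u : List L), N ≤ u.count g →
      ∃ r, u.Perm (List.replicate N g ++ r) := by
    intro N g
    induction N with
    | zero => intro u _; exact ⟨u, by simp⟩
    | succ N ih =>
      intro u hu
      have hmem : g ∈ u := List.count_pos_iff.mp (by omega)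
      have hcount : N ≤ (u.erase g).count g := by
        rw [List.count_erase_self]; omega
      obtain ⟨r, hr⟩ := ih (u.erase g) hcount
      refine ⟨r, ?_⟩
      have h1 : u.Perm (g :: u.erase g) := List.perm_cons_erase hmem
      have h2 : (List.replicate (N + 1) g ++ r) = g :: (List.replicate N g ++ r) := by
        rw [List.replicate_succ]; rfl
      rw [h2]
      exact h1.trans (hr.cons g)
  -- the finite set of words
  set Wset : Set (List L) := {u | ∀ g : L, u.count g < NF g} with hWset
  have Wfin : Wset.Finite := by
    apply Set.Finite.subset (List.finite_length_le L (∑ g : L, (NF g - 1)))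
    intro u hu
    simp only [Set.mem_setOf_eq]
    have h1 : u.length = Multiset.card (↑u : Multiset L) := rfl
    rw [h1, ← Multiset.toFinset_sum_count_eq]
    calc ∑ a ∈ (↑u : Multiset L).toFinset, Multiset.count a ↑u
        ≤ ∑ a : L, Multiset.count a ↑u := by
          apply Finset.sum_le_sum_of_subset (Finset.subset_univ _)
      _ ≤ ∑ g : L, (NF g - 1) := by
          apply Finset.sum_le_sum
          intro g _
          have := hu g
          rw [Multiset.coe_count]
          convert Nat.le_sub_one_of_lt this using 2
          · rfl
          · exact lawful_beq_subsingleton _ _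
  set GG : Set K := (fun q : List L × (ℤ × K) => Dw q.1 q.2.2) '' (Wset ×ˢ (s : Set (ℤ × K)))
    with hGG
  have GGfin : GG.Finite := (Wfin.prod s.finite_toSet).image _
  set M : Submodule A K := Submodule.span A GG with hM
  -- the key claim: words of suitable degree lie in M, given the lower part does
  have claimC : ∀ n : ℤ, (∀ y ∈ FK (n - 1), y ∈ M) → ∀ (u : List L) (p : ℤ × K),
      p ∈ s → wt u + p.1 ≤ n → Dw u p.2 ∈ M := by
    intro n Hlow u p hp hle
    by_cases hW : ∀ g : L, u.count g < NF g
    · exact Submodule.subset_span ⟨(u, p), ⟨hW, hp⟩, rfl⟩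
    · push_neg at hW
      obtain ⟨g, hg⟩ := hW
      obtain ⟨r, hperm⟩ := extract (NF g) g u hg
      have hv : p.2 ∈ FK p.1 := hs1 p hp
      have h1 : Dw u p.2 - Dw (List.replicate (NF g) g ++ r) p.2 ∈ FK (p.1 + wt u - 1) :=
        mem_of_eq (by ring) (Dperm hperm p.1 p.2 hv)
      have hwtu : wt u = (NF g : ℤ) * g.1.1 + wt r := by
        rw [wt_perm hperm]
        simp [hwt, List.map_append, List.sum_append, List.map_replicate,
          List.sum_replicate, nsmul_eq_mul]
      have hr : Dw r p.2 ∈ FK (p.1 + wt r) := Dwmem r p.1 p.2 hv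
      have h2 : Dw (List.replicate (NF g) g ++ r) p.2 ∈ FK (p.1 + wt u - 1) := by
        rw [Dw_append, Dw_replicate]
        exact mem_of_eq (by rw [hwtu]; ring) (hDF g _ _ hr)
      have hle1 : p.1 + wt u - 1 ≤ n - 1 := by omega
      have : Dw u p.2 = (Dw u p.2 - Dw (List.replicate (NF g) g ++ r) p.2)
          + Dw (List.replicate (NF g) g ++ r) p.2 := by abel
      rw [this]
      exact add_mem (Hlow _ (hmono hle1 h1)) (Hlow _ (hmono hle1 h2))
  -- filtered pieces of the A-span of words
  set Mp : ℤ → AddSubgroup K := fun m => AddSubgroup.closure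
    {z : K | ∃ (i : ℤ) (aa : A) (u : List L) (p : ℤ × K),
      p ∈ s ∧ aa ∈ FA.F i ∧ i + wt u + p.1 ≤ m ∧ z = aa • Dw u p.2} with hMp
  set Mpp : ℤ → AddSubgroup K := fun m => Mp m ⊔ FK (m - 1) with hMpp
  have Mp_le_FK : ∀ m : ℤ, Mp m ≤ FK m := by
    intro m
    rw [hMp]
    apply AddSubgroup.closure_le (FK m) |>.mpr
    rintro z ⟨i, aa, u, p, hp, ha, hle, rfl⟩
    have h1 : aa • Dw u p.2 ∈ FK (i + wt u + p.1) :=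
      mem_of_eq (by ring) (hFA ha (Dwmem u p.1 p.2 (hs1 p hp)))
    exact hmono hle h1
  have Mpp_le_FK : ∀ m : ℤ, Mpp m ≤ FK m := by
    intro m
    rw [hMpp]
    exact sup_le (Mp_le_FK m) (hmono (by omega))
  have Mp_mono : ∀ {m m' : ℤ}, m ≤ m' → Mp m ≤ Mp m' := by
    intro m m' h
    apply AddSubgroup.closure_mono
    rintro z ⟨i, aa, u, p, hp, ha, hle, rfl⟩
    exact ⟨i, aa, u, p, hp, ha, by omega, rfl⟩
  have Mpp_mono : ∀ {m m' : ℤ}, m ≤ m' → Mpp m ≤ Mpp m' := by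
    intro m m' h
    exact sup_le (le_sup_of_le_left (Mp_mono h)) (le_sup_of_le_right (hmono (by omega)))
  -- left multiplication maps Mpp m into Mpp (m + i)
  have Lmap : ∀ (i : ℤ) (aa : A), aa ∈ FA.F i → ∀ (m : ℤ) (x : K), x ∈ Mpp m →
      aa • x ∈ Mpp (m + i) := by
    intro i aa ha m x hx
    rw [hMpp] at hx
    rw [AddSubgroup.mem_sup] at hx
    obtain ⟨y, hy, z, hz, rfl⟩ := hx
    have hyM : aa • y ∈ Mp (m + i) := by
      refine AddSubgroup.closure_induction ?_ ?_ ?_ ?_ hy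
      · rintro w ⟨i', aa', u, p, hp, ha', hle, rfl⟩
        rw [← mul_smul]
        apply AddSubgroup.subset_closure
        exact ⟨i + i', aa * aa', u, p, hp, FA.mul_mem ha ha', by omega, rfl⟩
      · rw [smul_zero]; exact zero_mem _
      · intro w₁ w₂ _ _ h1 h2
        rw [smul_add]; exact add_mem h1 h2
      · intro w _ h
        rw [smul_neg]; exact neg_mem h
    have hzF : aa • z ∈ FK (m + i - 1) := mem_of_eq (by ring) (hFA ha hz)
    rw [smul_add]
    exact add_mem (le_sup_left (α := AddSubgroup K) hyM) (le_sup_right (α := AddSubgroup K) hzF)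
  -- single letters of C map Mpp m into Mpp (m + deg)
  have Rmap : ∀ (g : L) (m : ℤ) (x : K), x ∈ Mpp m → g.1.2 • x ∈ Mpp (m + g.1.1) := by
    intro g m x hx
    rw [hMpp, AddSubgroup.mem_sup] at hx
    obtain ⟨y, hy, z, hz, rfl⟩ := hx
    have hyM : g.1.2 • y ∈ Mp (m + g.1.1) := by
      refine AddSubgroup.closure_induction ?_ ?_ ?_ ?_ hy
      · rintro w ⟨i', aa', u, p, hp, ha', hle, rfl⟩
        have key : g.1.2 • (aa' • Dw u p.2)
            = (aa' * aF g) • Dw u p.2 - aa' • Dw (g :: u) p.2 := by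
          rw [Dw_cons]
          show g.1.2 • (aa' • Dw u p.2)
            = (aa' * aF g) • Dw u p.2 - aa' • (aF g • Dw u p.2 - g.1.2 • Dw u p.2)
          rw [smul_sub, mul_smul, sub_sub_cancel, smul_comm]
        rw [key]
        refine sub_mem (AddSubgroup.subset_closure ?_) (AddSubgroup.subset_closure ?_)
        · exact ⟨i' + g.1.1, aa' * aF g, u, p, hp, FA.mul_mem ha' (haF g), by omega, rfl⟩
        · exact ⟨i', aa', g :: u, p, hp, ha', by rw [wt_cons]; omega, rfl⟩
      · rw [smul_zero]; exact zero_mem _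
      · intro w₁ w₂ _ _ h1 h2
        rw [smul_add]; exact add_mem h1 h2
      · intro w _ h
        rw [smul_neg]; exact neg_mem h
    have hzF : g.1.2 • z ∈ FK (m + g.1.1 - 1) :=
      mem_of_eq (by ring) (hFC (hs'1 g.1 g.2) hz)
    rw [smul_add]
    exact add_mem (le_sup_left (α := AddSubgroup K) hyM) (le_sup_right (α := AddSubgroup K) hzF)
  -- arbitrary elements of C map Mpp m into Mpp (m + j)
  have Rgen : ∀ (j : ℤ) (c : C), c ∈ FC.F j → ∀ (m : ℤ) (x : K), x ∈ Mpp m →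
      c • x ∈ Mpp (m + j) := by
    intro j c hc m x hx
    obtain ⟨y, hy, hcy⟩ := hs'2 j c hc
    have hyx : y • x ∈ Mpp (m + j) := by
      have : y • x ∈ FK (m + j - 1) :=
        mem_of_eq (by ring) (hFC hy (Mpp_le_FK m hx))
      exact le_sup_right (α := AddSubgroup K) this
    have hmonl : ∀ (l : List (ℤ × C)), (∀ q ∈ l, q ∈ s') →
        ((l.map Prod.snd).prod) • x ∈ Mpp (m + (l.map Prod.fst).sum) := by
      intro l
      induction l with
      | nil => intro _; simpa using hx
      | cons q t ih =>
        intro hql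
        have hq : q ∈ s' := hql q List.mem_cons_self
        have ht : ∀ q' ∈ t, q' ∈ s' := fun q' hq' => hql q' (List.mem_cons_of_mem q hq')
        have h1 : ((t.map Prod.snd).prod) • x ∈ Mpp (m + (t.map Prod.fst).sum) := ih ht
        have h2 : q.2 • ((t.map Prod.snd).prod) • x
            ∈ Mpp (m + (t.map Prod.fst).sum + q.1) := Rmap ⟨q, hq⟩ _ _ h1
        rw [List.map_cons, List.map_cons, List.prod_cons, List.sum_cons, mul_smul]
        exact Mpp_mono (by omega) h2
    have hczx : (c - y) • x ∈ Mpp (m + j) := by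
      refine AddSubgroup.closure_induction ?_ ?_ ?_ ?_ hcy
      · rintro w ⟨l, hl, hsum, rfl⟩
        have := hmonl l hl
        exact Mpp_mono (by omega) this
      · rw [zero_smul]; exact zero_mem _
      · intro w₁ w₂ _ _ h1 h2
        rw [add_smul]; exact add_mem h1 h2
      · intro w _ h
        rw [neg_smul]; exact neg_mem h
    have : c • x = (c - y) • x + y • x := by rw [sub_smul]; abel
    rw [this]
    exact add_mem hczx hyx
  -- Mpp n is contained in M, given the lower part is
  have Csub : ∀ n : ℤ, (∀ y ∈ FK (n - 1), y ∈ M) → ∀ x ∈ Mpp n, x ∈ M := by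
    intro n Hlow x hx
    rw [hMpp, AddSubgroup.mem_sup] at hx
    obtain ⟨y, hy, z, hz, rfl⟩ := hx
    refine add_mem ?_ (Hlow z hz)
    refine AddSubgroup.closure_induction ?_ (zero_mem M) (fun _ _ _ _ h1 h2 => add_mem h1 h2)
      (fun _ _ h => neg_mem h) hy
    rintro w ⟨i, aa, u, p, hp, ha, hle, rfl⟩
    by_cases hi : i < 0
    · have : aa = 0 := by
        have := hAneg i hi
        rw [this] at ha
        simpa using ha
      rw [this, zero_smul]; exact zero_mem M
    · push_neg at hi
      exact Submodule.smul_mem M aa (claimC n Hlow u p hp (by omega))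
  -- the generators lie in Mp of their degree
  have gen_mem : ∀ p ∈ s, p.2 ∈ Mp p.1 := by
    intro p hp
    have : p.2 = (1 : A) • Dw [] p.2 := by rw [Dw_nil, one_smul]
    rw [this]
    exact AddSubgroup.subset_closure ⟨0, 1, [], p, hp, FA.one_mem, by simp [hwt], rfl⟩
  -- the inductive step
  have step : ∀ n : ℤ, (∀ y ∈ FK (n - 1), y ∈ M) → ∀ x ∈ FK n, x ∈ M := by
    intro n Hlow x hx
    have hsup := hs2 n x hx
    have hle : (⨆ p ∈ s, ⨆ (i : ℤ) (j : ℤ) (_ : i + j + p.1 ≤ n),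
        AddSubgroup.closure {z : K | ∃ a ∈ FA.F i, ∃ c ∈ FC.F j, z = a • c • p.2})
        ≤ (Submodule.toAddSubgroup M) := by
      refine iSup_le fun p => iSup_le fun hp => iSup_le fun i => iSup_le fun j =>
        iSup_le fun hij => ?_
      rw [AddSubgroup.closure_le]
      rintro z ⟨aa, ha, c, hc, rfl⟩
      have h1 : c • p.2 ∈ Mpp (p.1 + j) := Rgen j c hc p.1 p.2
        (le_sup_left (α := AddSubgroup K) (gen_mem p hp))
      have h2 : aa • c • p.2 ∈ Mpp (p.1 + j + i) := Lmap i aa ha _ _ h1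
      exact Csub n Hlow _ (Mpp_mono (by omega) h2)
    exact hle hsup
  -- base case: below all generator degrees the filtration vanishes
  have base : ∀ n : ℤ, (∀ p ∈ s, n < p.1) → ∀ x ∈ FK n, x ∈ M := by
    intro n hn x hx
    have hsup := hs2 n x hx
    have hle : (⨆ p ∈ s, ⨆ (i : ℤ) (j : ℤ) (_ : i + j + p.1 ≤ n),
        AddSubgroup.closure {z : K | ∃ a ∈ FA.F i, ∃ c ∈ FC.F j, z = a • c • p.2})
        ≤ (Submodule.toAddSubgroup M) := by
      refine iSup_le fun p => iSup_le fun hp => iSup_le fun i => iSup_le fun j =>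
        iSup_le fun hij => ?_
      rw [AddSubgroup.closure_le]
      rintro z ⟨aa, ha, c, hc, rfl⟩
      have hij0 : i < 0 ∨ j < 0 := by have := hn p hp; omega
      rcases hij0 with hi | hj
      · have : aa = 0 := by rw [hAneg i hi] at ha; simpa using ha
        rw [this, zero_smul]; exact zero_mem M
      · have : c = 0 := by rw [hCneg j hj] at hc; simpa using hc
        rw [this, zero_smul, smul_zero]; exact zero_mem M
    exact hle hsup
  set n₀ : ℤ := (insert (0:ℤ) (s.image Prod.fst)).min' (by simp) - 1 with hn₀
  have hn₀lt : ∀ p ∈ s, n₀ < p.1 := by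
    intro p hp
    have h1 : (insert (0:ℤ) (s.image Prod.fst)).min' (by simp) ≤ p.1 :=
      Finset.min'_le _ _ (Finset.mem_insert_of_mem (Finset.mem_image_of_mem Prod.fst hp))
    omega
  have main : ∀ k : ℕ, ∀ n : ℤ, n ≤ n₀ + k → ∀ x ∈ FK n, x ∈ M := by
    intro k
    induction k with
    | zero =>
      intro n hnk x hx
      exact base n (fun p hp => by have := hn₀lt p hp; omega) x hx
    | succ k ih =>
      intro n hnk x hx
      exact step n (fun y hy => ih (n - 1) (by push_cast at hnk; omega) y hy) x hx
  have hall : ∀ x : K, x ∈ M := by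
    intro x
    obtain ⟨n, hn⟩ := hexh x
    exact main (n - n₀).toNat n (by have := Int.self_le_toNat (n - n₀); omega) x hn
  rw [Module.finite_def, Submodule.fg_def]
  exact ⟨GG, GGfin, eq_top_iff.mpr fun x _ => hall x⟩

/-- Let `B`, `B'` be nonnegatively filtered algebras with
`gr B ≅ gr B'` finitely generated commutative, and let `K` be a finitely generated
`(B, B')`-bimodule (with a good filtration) whose characteristic variety, as a left
`B ⊗ B'^op`-module, is contained in the diagonal `Δ ⊆ Spec (gr B) × Spec (gr B')`
(a weak Harish-Chandra bimodule).  Then `K` is finitely generated as a left `B`-module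
and as a right `B'`-module. -/
theorem stmt18 {B B' K : Type*} [Ring B] [Ring B'] [AddCommGroup K]
    [Module B K] [Module B'ᵐᵒᵖ K] [SMulCommClass B B'ᵐᵒᵖ K]
    (FB : RingFiltration B) (FB' : RingFiltration B')
    (hBneg : FB.Nonneg) (hB'neg : FB'.Nonneg)
    (hBcomm : GrCommutative FB) (hB'comm : GrCommutative FB')
    (hBfg : GrFG FB) (hB'fg : GrFG FB')
    (FK : BimodFiltration (K := K) FB FB')
    (hgood : BimodGood FB FB' FK)
    (hdiag : DiagonalSupport FB FB' FK) :
    Module.Finite B K ∧ Module.Finite B'ᵐᵒᵖ K := by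
  classical
  obtain ⟨s, hs1, hs2⟩ := hgood
  constructor
  · -- finiteness as a left `B`-module
    refine hc_aux FB FB'.op hBneg (RingFiltration.op_nonneg hB'neg) hBcomm
      (grCommutative_op hB'comm) (grFG_op hB'fg) FK.F FK.mono
      (fun {i j a x} hi hx => FK.smul_mem hi hx)
      (fun {i j c x} hi hx => FK.smul_mem' (b' := c.unop) hi hx)
      FK.exhaustive s hs1 ?_ ?_
    · intro n x hx
      have hsets : ∀ (p : ℤ × K) (i j : ℤ),
          {z : K | ∃ a ∈ FB.F i, ∃ b' ∈ FB'.F j, z = a • (op b') • p.2}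
          = {z : K | ∃ a ∈ FB.F i, ∃ c ∈ (FB'.op).F j, z = a • c • p.2} := by
        intro p i j
        ext z
        constructor
        · rintro ⟨a, ha, b', hb', rfl⟩
          exact ⟨a, ha, op b', hb', rfl⟩
        · rintro ⟨a, ha, c, hc, rfl⟩
          exact ⟨a, ha, c.unop, hc, rfl⟩
      have h := hs2 n x hx
      simpa only [hsets] using h
    · intro i c hc
      obtain ⟨b, hb, N, hN, hP⟩ := hdiag.2 i c.unop hc
      exact ⟨b, hb, N, hN, fun n x hx => hP n x hx⟩
  · -- finiteness as a right `B'`-module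
    haveI := SMulCommClass.symm B B'ᵐᵒᵖ K
    refine hc_aux (A := B'ᵐᵒᵖ) (C := B) FB'.op FB (RingFiltration.op_nonneg hB'neg) hBneg
      (grCommutative_op hB'comm) hBcomm hBfg FK.F FK.mono
      (fun {i j a x} hi hx => FK.smul_mem' (b' := a.unop) hi hx)
      (fun {i j c x} hi hx => FK.smul_mem hi hx)
      FK.exhaustive s hs1 ?_ ?_
    · intro n x hx
      have h := hs2 n x hx
      have hle : (⨆ p ∈ s, ⨆ (i : ℤ) (j : ℤ) (_ : i + j + p.1 ≤ n),
          AddSubgroup.closure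
            {z : K | ∃ a ∈ FB.F i, ∃ b' ∈ FB'.F j, z = a • (op b') • p.2})
          ≤ ⨆ p ∈ s, ⨆ (i : ℤ) (j : ℤ) (_ : i + j + p.1 ≤ n),
            AddSubgroup.closure
              {z : K | ∃ a ∈ (FB'.op).F i, ∃ c ∈ FB.F j, z = a • c • p.2} := by
        refine iSup_le fun p => iSup_le fun hp => iSup_le fun i => iSup_le fun j =>
          iSup_le fun hij => ?_
        have hcl : AddSubgroup.closure
            {z : K | ∃ a ∈ FB.F i, ∃ b' ∈ FB'.F j, z = a • (op b') • p.2}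
            ≤ AddSubgroup.closure
              {z : K | ∃ a ∈ (FB'.op).F j, ∃ c ∈ FB.F i, z = a • c • p.2} := by
          rw [AddSubgroup.closure_le]
          rintro z ⟨a, ha, b', hb', rfl⟩
          apply AddSubgroup.subset_closure
          exact ⟨op b', hb', a, ha, (smul_comm a (op b') p.2)⟩
        refine le_trans hcl (le_iSup_of_le p (le_iSup_of_le hp (le_iSup_of_le j
          (le_iSup_of_le i (le_iSup_of_le (by omega) le_rfl)))))
      exact hle h
    · intro i c hc
      obtain ⟨b', hb', N, hN, hP⟩ := hdiag.1 i c hc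
      refine ⟨op b', hb', N, hN, ?_⟩
      intro n x hx
      have key : ∀ (k : ℕ) (x : K),
          (fun y : K => (op b') • y - c • y)^[k] x = (fun y : K => c • y - (op b') • y)^[k] x
          ∨ (fun y : K => (op b') • y - c • y)^[k] x
            = -((fun y : K => c • y - (op b') • y)^[k] x) := by
        intro k
        induction k with
        | zero => intro x; left; rfl
        | succ k ih =>
          intro x
          rw [Function.iterate_succ_apply' _ k x, Function.iterate_succ_apply' _ k x]
          rcases ih x with h | h
          · right
            rw [h]
            exact (neg_sub _ _).symm
          · left
            rw [h]
            show (op b') • (-((fun y : K => c • y - (op b') • y)^[k] x))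
              - c • (-((fun y : K => c • y - (op b') • y)^[k] x)) = _
            rw [smul_neg, smul_neg]
            abel
      rcases key N x with h | h
      · rw [h]
        exact hP n x hx
      · rw [h]
        exact neg_mem (hP n x hx)
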